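/- Let X be a determinantal point process with kernel K and let D ⊆ V be a disjoint union of sets C_1, …, C_r with K_{C_m, C_{m'}} = 0 for m ≠ m'. Then the random subvectors X_{C_1}, …, X_{C_r} are mutually independent: for every i ∈ {0,1}^D, P(X_D = i_D) = ∏_{m=1}^r P(X_{C_m} = i_{C_m}). -/

import Mathlib

open Matrix MeasureTheory

/-- Principal submatrix of `K` on the finset `A`. -/
def psub {V : Type*} (K : Matrix V V ℝ) (A : Finset V) : Matrix A A ℝ :=
  K.submatrix Subtype.val Subtype.val

lemma det_psub_union {V : Type*} [DecidableEq V] (K : Matrix V V ℝ) (S₁ S₂ : Finset V)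
    (hd : Disjoint S₁ S₂)
    (h12 : ∀ a ∈ S₁, ∀ b ∈ S₂, K a b = 0)
    (h21 : ∀ a ∈ S₂, ∀ b ∈ S₁, K a b = 0) :
    (psub K (S₁ ∪ S₂)).det = (psub K S₁).det * (psub K S₂).det := by
  classical
  let e : (S₁ ⊕ S₂ : Type _) ≃ (S₁ ∪ S₂ : Finset V) :=
  { toFun := fun x => Sum.elim (fun a => ⟨a.1, Finset.mem_union_left _ a.2⟩)
      (fun a => ⟨a.1, Finset.mem_union_right _ a.2⟩) x
    invFun := fun x => if h : x.1 ∈ S₁ then Sum.inl ⟨x.1, h⟩ else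
      Sum.inr ⟨x.1, (Finset.mem_union.mp x.2).resolve_left h⟩
    left_inv := by
      rintro (⟨a, ha⟩ | ⟨a, ha⟩)
      · simp [ha]
      · have : a ∉ S₁ := Finset.disjoint_right.mp hd ha
        simp [this]
    right_inv := by
      rintro ⟨a, ha⟩
      by_cases h : a ∈ S₁ <;> simp [h] }
  have key : (psub K (S₁ ∪ S₂)).submatrix e e
      = fromBlocks (psub K S₁) 0 0 (psub K S₂) := by
    ext i j
    rcases i with i | i <;> rcases j with j | j <;>
      simp only [submatrix_apply, psub, fromBlocks_apply₁₁, fromBlocks_apply₁₂,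
        fromBlocks_apply₂₁, fromBlocks_apply₂₂, Matrix.zero_apply, e, Equiv.coe_fn_mk,
        Sum.elim_inl, Sum.elim_inr]
    · exact h12 i.1 i.2 j.1 j.2
    · exact h21 i.1 i.2 j.1 j.2
  calc (psub K (S₁ ∪ S₂)).det = ((psub K (S₁ ∪ S₂)).submatrix e e).det :=
        (Matrix.det_submatrix_equiv_self e _).symm
    _ = (fromBlocks (psub K S₁) 0 0 (psub K S₂)).det := by rw [key]
    _ = (psub K S₁).det * (psub K S₂).det := Matrix.det_fromBlocks_zero₁₂ _ _ _

lemma sum_powerset_union' {V : Type*} [DecidableEq V] {β : Type*} [AddCommMonoid β]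
    (s t : Finset V) (hd : Disjoint s t) (f : Finset V → β) :
    ∑ u ∈ (s ∪ t).powerset, f u = ∑ a ∈ s.powerset, ∑ b ∈ t.powerset, f (a ∪ b) := by
  classical
  induction s using Finset.induction_on generalizing f with
  | empty => simp
  | @insert a s' ha ih =>
    have hat : a ∉ t := Finset.disjoint_left.mp hd (Finset.mem_insert_self a s')
    have hd' : Disjoint s' t := (Finset.disjoint_insert_left.mp hd).2
    have has't : a ∉ s' ∪ t := by simp [ha, hat]
    have : insert a s' ∪ t = insert a (s' ∪ t) := by rw [Finset.insert_union]
    rw [this, Finset.sum_powerset_insert has't, ih hd' f,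
      Finset.sum_powerset_insert ha, ih hd' (fun u => f (insert a u))]
    congr 1
    refine Finset.sum_congr rfl fun u hu => Finset.sum_congr rfl fun b hb => ?_
    rw [Finset.insert_union]

lemma sum_prod_powerset {V : Type*} [DecidableEq V] {ι : Type*} [DecidableEq ι]
    (s : Finset ι) (B' : ι → Finset V) (g : ι → Finset V → ℝ)
    (hd : ∀ m ∈ s, ∀ m' ∈ s, m ≠ m' → Disjoint (B' m) (B' m')) :
    ∑ T ∈ (s.biUnion B').powerset, ∏ m ∈ s, g m (T ∩ B' m)
      = ∏ m ∈ s, ∑ T ∈ (B' m).powerset, g m T := by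
  induction s using Finset.induction_on with
  | empty => simp
  | @insert a s' ha ih =>
    have hda : Disjoint (B' a) (s'.biUnion B') := by
      rw [Finset.disjoint_biUnion_right]
      intro m hm
      exact hd a (Finset.mem_insert_self a s') m (Finset.mem_insert_of_mem hm)
        (fun h => ha (h ▸ hm))
    rw [Finset.biUnion_insert, sum_powerset_union' _ _ hda]
    have step : ∀ T₁ ∈ (B' a).powerset, ∀ T₂ ∈ (s'.biUnion B').powerset,
        ∏ m ∈ insert a s', g m ((T₁ ∪ T₂) ∩ B' m)
          = g a T₁ * ∏ m ∈ s', g m (T₂ ∩ B' m) := by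
      intro T₁ h₁ T₂ h₂
      rw [Finset.mem_powerset] at h₁ h₂
      rw [Finset.prod_insert ha]
      have e1 : (T₁ ∪ T₂) ∩ B' a = T₁ := by
        have h2e : T₂ ∩ B' a = ∅ :=
          Finset.disjoint_iff_inter_eq_empty.mp ((hda.mono_right h₂).symm)
        rw [Finset.union_inter_distrib_right, Finset.inter_eq_left.mpr h₁, h2e,
          Finset.union_empty]
      rw [e1]
      congr 1
      refine Finset.prod_congr rfl fun m hm => ?_
      have h1e : T₁ ∩ B' m = ∅ := by
        have : Disjoint (B' a) (B' m) :=
          hd a (Finset.mem_insert_self a s') m (Finset.mem_insert_of_mem hm)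
            (fun h => ha (h ▸ hm))
        exact Finset.disjoint_iff_inter_eq_empty.mp (this.mono_left h₁)
      rw [Finset.union_inter_distrib_right, h1e, Finset.empty_union]
    calc ∑ T₁ ∈ (B' a).powerset, ∑ T₂ ∈ (s'.biUnion B').powerset,
          ∏ m ∈ insert a s', g m ((T₁ ∪ T₂) ∩ B' m)
        = ∑ T₁ ∈ (B' a).powerset, ∑ T₂ ∈ (s'.biUnion B').powerset,
          g a T₁ * ∏ m ∈ s', g m (T₂ ∩ B' m) := by
          refine Finset.sum_congr rfl fun T₁ h₁ => Finset.sum_congr rfl fun T₂ h₂ => ?_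
          exact step T₁ h₁ T₂ h₂
      _ = (∑ T₁ ∈ (B' a).powerset, g a T₁) *
          ∑ T₂ ∈ (s'.biUnion B').powerset, ∏ m ∈ s', g m (T₂ ∩ B' m) := by
          rw [Finset.sum_mul]
          exact Finset.sum_congr rfl fun T₁ _ => (Finset.mul_sum _ _ _).symm
      _ = ∏ m ∈ insert a s', ∑ T ∈ (B' m).powerset, g m T := by
          rw [ih (fun m hm m' hm' hne => hd m (Finset.mem_insert_of_mem hm) m'
            (Finset.mem_insert_of_mem hm') hne), Finset.prod_insert ha]

/-- The event that `X` is `true` on `A` and `false` on `B`. -/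
def Ev {V Ω : Type*} (X : Ω → V → Bool) (A B : Finset V) : Set Ω :=
  {ω | (∀ v ∈ A, X ω v = true) ∧ ∀ v ∈ B, X ω v = false}

lemma Ev_measurable {V Ω : Type*} [MeasurableSpace Ω] (X : Ω → V → Bool)
    (hmeas : ∀ v, Measurable fun ω => X ω v) (A B : Finset V) :
    MeasurableSet (Ev X A B) := by
  have hrepr : Ev X A B = (⋂ v ∈ (A : Set V), (fun ω => X ω v) ⁻¹' {true}) ∩
      ⋂ v ∈ (B : Set V), (fun ω => X ω v) ⁻¹' {false} := by
    ext ω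
    simp [Ev, Set.mem_iInter]
  rw [hrepr]
  exact (MeasurableSet.biInter A.countable_toSet fun v _ =>
      (hmeas v) (measurableSet_singleton true)).inter
    (MeasurableSet.biInter B.countable_toSet fun v _ =>
      (hmeas v) (measurableSet_singleton false))

lemma Ev_rec {V Ω : Type*} [DecidableEq V] [MeasurableSpace Ω] (P : Measure Ω) [IsProbabilityMeasure P]
    (X : Ω → V → Bool) (hmeas : ∀ v, Measurable fun ω => X ω v)
    (A B : Finset V) (b : V) (hbA : b ∉ A) (hbB : b ∉ B) :
    (P (Ev X A B)).toReal
      = (P (Ev X A (insert b B))).toReal + (P (Ev X (insert b A) B)).toReal := by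
  have hsplit : Ev X A B = Ev X A (insert b B) ∪ Ev X (insert b A) B := by
    ext ω
    simp only [Set.mem_union, Set.mem_setOf_eq, Ev, Finset.forall_mem_insert]
    constructor
    · rintro ⟨h1, h2⟩
      cases hb : X ω b with
      | false => exact Or.inl ⟨h1, rfl, h2⟩
      | true => exact Or.inr ⟨⟨rfl, h1⟩, h2⟩
    · rintro (⟨h1, _, h2⟩ | ⟨⟨_, h1⟩, h2⟩) <;> exact ⟨h1, h2⟩
  have hdisjE : Disjoint (Ev X A (insert b B)) (Ev X (insert b A) B) := by
    rw [Set.disjoint_left]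
    rintro ω ⟨h1, h2⟩ ⟨h3, h4⟩
    have hf := h2 b (Finset.mem_insert_self b B)
    have ht := h3 b (Finset.mem_insert_self b A)
    rw [ht] at hf
    exact Bool.noConfusion hf
  rw [hsplit, measure_union hdisjE (Ev_measurable X hmeas _ _),
    ENNReal.toReal_add (measure_ne_top P _) (measure_ne_top P _)]

lemma Ev_toReal_eq {V Ω : Type*} [Fintype V] [DecidableEq V]
    [MeasurableSpace Ω] (P : Measure Ω) [IsProbabilityMeasure P]
    (K : Matrix V V ℝ) (X : Ω → V → Bool) (hmeas : ∀ v, Measurable fun ω => X ω v)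
    (hdpp : ∀ S : Finset V,
      (P {ω | ∀ v ∈ S, X ω v = true}).toReal = (psub K S).det) :
    ∀ (B A : Finset V), Disjoint A B →
      (P (Ev X A B)).toReal
        = ∑ T ∈ B.powerset, (-1 : ℝ) ^ T.card * (psub K (A ∪ T)).det := by
  intro B
  induction B using Finset.induction_on with
  | empty =>
    intro A _
    have hE : Ev X A ∅ = {ω | ∀ v ∈ A, X ω v = true} := by
      ext ω; simp [Ev]
    rw [Finset.powerset_empty, Finset.sum_singleton, Finset.union_empty, hE, hdpp A,
      Finset.card_empty, pow_zero, one_mul]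
  | @insert b B hb ih =>
    intro A hdAB
    have hbA : b ∉ A := fun h => Finset.disjoint_left.mp hdAB h (Finset.mem_insert_self b B)
    have hd1 : Disjoint A B := (Finset.disjoint_insert_right.mp hdAB).2
    have hd2 : Disjoint (insert b A) B := Finset.disjoint_insert_left.mpr ⟨hb, hd1⟩
    have hrec := Ev_rec P X hmeas A B b hbA hb
    have hmain : (P (Ev X A (insert b B))).toReal
        = (P (Ev X A B)).toReal - (P (Ev X (insert b A) B)).toReal := by linarith
    have hneg : ∑ T ∈ B.powerset, (-1 : ℝ) ^ (insert b T).card * (psub K (A ∪ insert b T)).det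
        = -∑ T ∈ B.powerset, (-1 : ℝ) ^ T.card * (psub K (insert b A ∪ T)).det := by
      rw [← Finset.sum_neg_distrib]
      refine Finset.sum_congr rfl fun T hT => ?_
      rw [Finset.mem_powerset] at hT
      have hbT : b ∉ T := fun h => hb (hT h)
      have hu : A ∪ insert b T = insert b A ∪ T := by
        rw [Finset.union_insert, Finset.insert_union]
      rw [Finset.card_insert_of_notMem hbT, pow_succ, hu]
      ring
    rw [hmain, ih A hd1, ih (insert b A) hd2, Finset.sum_powerset_insert hb, hneg]
    ring

theorem stmt12 {V : Type*} [Fintype V] [DecidableEq V]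
    {Ω : Type*} [MeasurableSpace Ω] (P : Measure Ω) [IsProbabilityMeasure P]
    (K : Matrix V V ℝ) (hsym : K.IsSymm)
    (hpsd : K.PosSemidef) (hpsd' : (1 - K).PosSemidef)
    (X : Ω → V → Bool) (hmeas : ∀ v, Measurable fun ω => X ω v)
    (hdpp : ∀ S : Finset V,
      (P {ω | ∀ v ∈ S, X ω v = true}).toReal = (psub K S).det)
    (r : ℕ) (C : Fin r → Finset V) (D : Finset V)
    (hdisj : ∀ m m', m ≠ m' → Disjoint (C m) (C m'))
    (hD : D = Finset.univ.biUnion C)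
    (hblock : ∀ m m', m ≠ m' → ∀ a ∈ C m, ∀ b ∈ C m', K a b = 0) :
    ∀ f : V → Bool,
      P {ω | ∀ v ∈ D, X ω v = f v} = ∏ m, P {ω | ∀ v ∈ C m, X ω v = f v} := by
  classical
  intro f
  set A : Finset V := D.filter (fun v => f v = true) with hA
  set B : Finset V := D.filter (fun v => f v = false) with hB
  have hCD : ∀ m, C m ⊆ D := fun m =>
    hD ▸ Finset.subset_biUnion_of_mem C (Finset.mem_univ m)
  have hABd : Disjoint A B := by
    rw [Finset.disjoint_left]
    intro v hv hv'
    rw [hA, Finset.mem_filter] at hv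
    rw [hB, Finset.mem_filter] at hv'
    rw [hv.2] at hv'
    exact Bool.noConfusion hv'.2
  have hAD : A ⊆ D := Finset.filter_subset _ _
  have hBD : B ⊆ D := Finset.filter_subset _ _
  -- the events
  have hEvD : {ω | ∀ v ∈ D, X ω v = f v} = Ev X A B := by
    ext ω
    simp only [Set.mem_setOf_eq, Ev]
    constructor
    · intro h
      constructor
      · intro v hv
        rw [hA, Finset.mem_filter] at hv
        exact (h v hv.1).trans hv.2
      · intro v hv
        rw [hB, Finset.mem_filter] at hv
        exact (h v hv.1).trans hv.2
    · rintro ⟨h1, h2⟩ v hv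
      cases hfv : f v with
      | true => exact h1 v (by rw [hA, Finset.mem_filter]; exact ⟨hv, hfv⟩)
      | false => exact h2 v (by rw [hB, Finset.mem_filter]; exact ⟨hv, hfv⟩)
  have hEvC : ∀ m, {ω | ∀ v ∈ C m, X ω v = f v} = Ev X (A ∩ C m) (B ∩ C m) := by
    intro m
    ext ω
    simp only [Set.mem_setOf_eq, Ev]
    constructor
    · intro h
      constructor
      · intro v hv
        rw [Finset.mem_inter, hA, Finset.mem_filter] at hv
        exact (h v hv.2).trans hv.1.2
      · intro v hv
        rw [Finset.mem_inter, hB, Finset.mem_filter] at hv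
        exact (h v hv.2).trans hv.1.2
    · rintro ⟨h1, h2⟩ v hv
      cases hfv : f v with
      | true =>
        refine h1 v ?_
        rw [Finset.mem_inter, hA, Finset.mem_filter]
        exact ⟨⟨hCD m hv, hfv⟩, hv⟩
      | false =>
        refine h2 v ?_
        rw [Finset.mem_inter, hB, Finset.mem_filter]
        exact ⟨⟨hCD m hv, hfv⟩, hv⟩
  rw [hEvD]
  have hprodrw : ∏ m, P {ω | ∀ v ∈ C m, X ω v = f v}
      = ∏ m, P (Ev X (A ∩ C m) (B ∩ C m)) :=
    Finset.prod_congr rfl fun m _ => by rw [hEvC m]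
  rw [hprodrw]
  -- reduce to a real-number identity
  have hprodne : (∏ m, P (Ev X (A ∩ C m) (B ∩ C m))) ≠ ⊤ :=
    (ENNReal.prod_lt_top fun m _ => measure_lt_top P _).ne
  rw [← ENNReal.toReal_eq_toReal_iff' (measure_ne_top P _) hprodne, ENNReal.toReal_prod]
  -- determinant factorization
  have hfact : ∀ S : Finset V, S ⊆ D →
      (psub K S).det = ∏ m, (psub K (S ∩ C m)).det := by
    intro S hS
    have key : ∀ s : Finset (Fin r),
        (psub K (s.biUnion (fun m => S ∩ C m))).det
          = ∏ m ∈ s, (psub K (S ∩ C m)).det := by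
      intro s
      induction s using Finset.induction_on with
      | empty => rw [Finset.biUnion_empty, Finset.prod_empty]; exact Matrix.det_isEmpty
      | @insert a s' ha ih =>
        rw [Finset.biUnion_insert,
          det_psub_union K _ _ ?_ ?_ ?_, ih, Finset.prod_insert ha]
        · rw [Finset.disjoint_biUnion_right]
          intro m hm
          exact ((hdisj a m (fun h => ha (h ▸ hm))).mono
            Finset.inter_subset_right Finset.inter_subset_right)
        · intro x hx y hy
          obtain ⟨m, hm, hy⟩ := Finset.mem_biUnion.mp hy
          exact hblock a m (fun h => ha (h ▸ hm)) x (Finset.mem_inter.mp hx).2 y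
            (Finset.mem_inter.mp hy).2
        · intro x hx y hy
          obtain ⟨m, hm, hx'⟩ := Finset.mem_biUnion.mp hx
          exact hblock m a (fun h => ha (h ▸ hm)) x (Finset.mem_inter.mp hx').2 y
            (Finset.mem_inter.mp hy).2
    have hSrep : S = Finset.univ.biUnion (fun m => S ∩ C m) := by
      ext v
      simp only [Finset.mem_biUnion, Finset.mem_univ, true_and, Finset.mem_inter]
      constructor
      · intro hv
        have hvD := hS hv
        rw [hD] at hvD
        obtain ⟨m, _, hm⟩ := Finset.mem_biUnion.mp hvD
        exact ⟨m, hv, hm⟩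
      · rintro ⟨m, hv, _⟩
        exact hv
    conv_lhs => rw [hSrep]
    exact key Finset.univ
  -- rewrite both sides via the inclusion–exclusion formula
  rw [Ev_toReal_eq P K X hmeas hdpp B A hABd]
  have hRHS : ∏ m, (P (Ev X (A ∩ C m) (B ∩ C m))).toReal
      = ∏ m, ∑ T ∈ (B ∩ C m).powerset,
          (-1 : ℝ) ^ T.card * (psub K ((A ∩ C m) ∪ T)).det :=
    Finset.prod_congr rfl fun m _ => Ev_toReal_eq P K X hmeas hdpp _ _
      (hABd.mono Finset.inter_subset_left Finset.inter_subset_left)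
  rw [hRHS]
  -- the combinatorial identity
  have hdB : ∀ m ∈ (Finset.univ : Finset (Fin r)), ∀ m' ∈ (Finset.univ : Finset (Fin r)),
      m ≠ m' → Disjoint (B ∩ C m) (B ∩ C m') := fun m _ m' _ hne =>
    (hdisj m m' hne).mono Finset.inter_subset_right Finset.inter_subset_right
  rw [← sum_prod_powerset Finset.univ (fun m => B ∩ C m)
    (fun m T => (-1 : ℝ) ^ T.card * (psub K ((A ∩ C m) ∪ T)).det) hdB]
  have hBrep : Finset.univ.biUnion (fun m => B ∩ C m) = B := by
    ext v
    simp only [Finset.mem_biUnion, Finset.mem_univ, true_and, Finset.mem_inter]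
    constructor
    · rintro ⟨m, hv, _⟩
      exact hv
    · intro hv
      have hvD := hBD hv
      rw [hD] at hvD
      obtain ⟨m, _, hm⟩ := Finset.mem_biUnion.mp hvD
      exact ⟨m, hv, hm⟩
  rw [hBrep]
  refine Finset.sum_congr rfl fun T hT => ?_
  rw [Finset.mem_powerset] at hT
  have hTD : T ⊆ D := hT.trans hBD
  have hTm : ∀ m : Fin r, T ∩ (B ∩ C m) = T ∩ C m := by
    intro m
    rw [← Finset.inter_assoc, Finset.inter_eq_left.mpr hT]
  have hcard : T.card = ∑ m, (T ∩ C m).card := by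
    have hTrep : T = Finset.univ.biUnion (fun m => T ∩ C m) := by
      ext v
      simp only [Finset.mem_biUnion, Finset.mem_univ, true_and, Finset.mem_inter]
      constructor
      · intro hv
        have hvD := hTD hv
        rw [hD] at hvD
        obtain ⟨m, _, hm⟩ := Finset.mem_biUnion.mp hvD
        exact ⟨m, hv, hm⟩
      · rintro ⟨m, hv, _⟩
        exact hv
    conv_lhs => rw [hTrep]
    exact Finset.card_biUnion fun m _ m' _ hne =>
      (hdisj m m' hne).mono Finset.inter_subset_right Finset.inter_subset_right
  have hsign : (-1 : ℝ) ^ T.card = ∏ m, (-1 : ℝ) ^ (T ∩ C m).card := by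
    rw [hcard, Finset.prod_pow_eq_pow_sum]
  have hdet : (psub K (A ∪ T)).det = ∏ m, (psub K ((A ∩ C m) ∪ (T ∩ C m))).det := by
    rw [hfact (A ∪ T) (Finset.union_subset hAD hTD)]
    exact Finset.prod_congr rfl fun m _ => by rw [Finset.union_inter_distrib_right]
  rw [hsign, hdet, ← Finset.prod_mul_distrib]
  exact Finset.prod_congr rfl fun m _ => by rw [hTm m]
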